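/- Let X, Z, Y be finite types and let g : X → Z → Y be such that for every x ∈ X the map z ↦ g x z is injective, and for every z ∈ Z the map x ↦ g x z is injective. Let S : X → Finset Y and T : Z → Finset Y be families of finite sets such that for all x ∈ X and z ∈ Z we have g x z ∈ S x ∪ T z. Then ∑_{x∈X} |S x| + ∑_{z∈Z} |T z| ≥ |X| · |Z|. -/

import Mathlib

/-- If `g : X → Z → Y` is injective in each argument separately and `g x z ∈ S x ∪ T z`
for all `x, z`, then `∑ |S x| + ∑ |T z| ≥ |X|·|Z|`. -/
theorem doubly_injective_covering_bound {X Z Y : Type*}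
    [Fintype X] [Fintype Z] [Fintype Y] [DecidableEq Y]
    (g : X → Z → Y)
    (hinj₁ : ∀ x : X, Function.Injective (g x))
    (hinj₂ : ∀ z : Z, Function.Injective (fun x => g x z))
    (S : X → Finset Y) (T : Z → Finset Y)
    (hcov : ∀ x : X, ∀ z : Z, g x z ∈ S x ∪ T z) :
    Fintype.card X * Fintype.card Z ≤ (∑ x : X, (S x).card) + ∑ z : Z, (T z).card := by
  classical
  set A : Finset (X × Z) := Finset.univ.filter (fun p => g p.1 p.2 ∈ S p.1) with hA
  set B : Finset (X × Z) := Finset.univ.filter (fun p => g p.1 p.2 ∈ T p.2) with hB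
  have hsub : (Finset.univ : Finset (X × Z)) ⊆ A ∪ B := by
    intro p _
    rcases Finset.mem_union.mp (hcov p.1 p.2) with h | h
    · exact Finset.mem_union_left _ (by simp [hA, h])
    · exact Finset.mem_union_right _ (by simp [hB, h])
  have h1 : Fintype.card X * Fintype.card Z ≤ A.card + B.card := by
    calc Fintype.card X * Fintype.card Z = (Finset.univ : Finset (X × Z)).card := by
          simp [Fintype.card_prod]
      _ ≤ (A ∪ B).card := Finset.card_le_card hsub
      _ ≤ A.card + B.card := Finset.card_union_le _ _
  have hAcard : A.card ≤ ∑ x : X, (S x).card := by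
    rw [← Finset.card_sigma Finset.univ S]
    apply Finset.card_le_card_of_injOn (fun p => ⟨p.1, g p.1 p.2⟩)
    · intro p hp
      simp only [hA, Finset.mem_coe, Finset.mem_filter] at hp
      simp [Finset.mem_sigma, hp.2]
    · rintro ⟨a, b⟩ _ ⟨c, d⟩ _ h
      simp only [Sigma.mk.inj_iff] at h
      obtain ⟨rfl, h2⟩ := h
      have := hinj₁ a (eq_of_heq h2)
      simp_all
  have hBcard : B.card ≤ ∑ z : Z, (T z).card := by
    rw [← Finset.card_sigma Finset.univ T]
    apply Finset.card_le_card_of_injOn (fun p => ⟨p.2, g p.1 p.2⟩)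
    · intro p hp
      simp only [hB, Finset.mem_coe, Finset.mem_filter] at hp
      simp [Finset.mem_sigma, hp.2]
    · rintro ⟨a, b⟩ _ ⟨c, d⟩ _ h
      simp only [Sigma.mk.inj_iff] at h
      obtain ⟨rfl, h2⟩ := h
      have := hinj₂ b (eq_of_heq h2)
      simp_all
  omega
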